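/- Let F : ℂⁿ → ℂ, n ≥ 2, be a nonconstant mixed polynomial which is polar weighted-homogeneous. Then the image of F contains a disk around 0, even in the germ sense: for every ε > 0 there exists η > 0 such that every w ∈ ℂ with |w| < η is of the form w = F(z) for some z with ‖z‖ < ε. (Lemma established in the proof of Theorem 5.2 via the Curve Selection Lemma and the S¹-action.) -/

import Mathlib

open Complex Filter Function Metric

noncomputable section

/-- `ℂⁿ` with its Euclidean (Hermitian) norm. -/
abbrev Cn (n : ℕ) := EuclideanSpace ℂ (Fin n)

/-- `F : ℂⁿ → ℂ` is a mixed polynomial: a polynomial in `z₁,…,zₙ` and `z̄₁,…,z̄ₙ`. -/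
def IsMixedPoly {n : ℕ} (F : Cn n → ℂ) : Prop :=
  ∃ (S : Finset ((Fin n → ℕ) × (Fin n → ℕ))) (c : ((Fin n → ℕ) × (Fin n → ℕ)) → ℂ),
    ∀ z : Cn n, F z =
      ∑ p ∈ S, c p * (∏ j, (z j) ^ (p.1 j)) * (∏ j, (starRingEnd ℂ (z j)) ^ (p.2 j))

/-- `F` is polar weighted-homogeneous. -/
def IsPolarWeightedHomogeneous {n : ℕ} (F : Cn n → ℂ) : Prop :=
  ∃ (p : Fin n → ℤ) (k : ℤ), (∀ j, p j ≠ 0) ∧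
    Finset.univ.gcd (fun j => (p j).natAbs) = 1 ∧ k ≠ 0 ∧
    ∀ lam : ℂ, ‖lam‖ = 1 → ∀ z : Cn n,
      F (WithLp.toLp 2 (fun j => lam ^ (p j) * z j)) = lam ^ k * F z

/-- **Lemma in the proof of Theorem 5.2** (via the Curve Selection Lemma and the
`S¹`-action):  the image of a nonconstant polar weighted-homogeneous mixed polynomial
`F : ℂⁿ → ℂ`, `n ≥ 2`, contains a disk around `0`, in the germ sense: for every `ε > 0`
there is `η > 0` such that every value `w` with `|w| < η` is attained by `F` on the
open ball of radius `ε`. -/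
theorem polarWeightedHomogeneous_image_contains_disk
    {n : ℕ} (hn : 2 ≤ n) (F : Cn n → ℂ)
    (hmixed : IsMixedPoly F) (hnc : ¬ ∀ z : Cn n, F z = F 0)
    (hpolar : IsPolarWeightedHomogeneous F) :
    ∀ ε > (0 : ℝ), ∃ η > (0 : ℝ), ∀ w : ℂ, ‖w‖ < η →
      ∃ z : Cn n, ‖z‖ < ε ∧ F z = w := by
  obtain ⟨p, k, hp, -, hk, hF⟩ := hpolar
  -- the circle action fixes 0
  have hzero : ∀ lam : ℂ, ‖lam‖ = 1 → WithLp.toLp 2 (fun j => lam ^ (p j) * (0 : Cn n) j) = (0 : Cn n) := by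
    intro lam _; ext j; simp
  -- F 0 = 0
  have hF0 : F 0 = 0 := by
    set lam : ℂ := Complex.exp ((Real.pi / (k : ℝ) : ℝ) * I) with hlamdef
    have hlam : ‖lam‖ = 1 := Complex.norm_exp_ofReal_mul_I _
    have hlamk : lam ^ k = -1 := by
      rw [hlamdef, ← Complex.exp_int_mul]
      have : (k : ℂ) * ((Real.pi / (k : ℝ) : ℝ) * I) = (Real.pi : ℂ) * I := by
        have hk' : (k : ℂ) ≠ 0 := Int.cast_ne_zero.mpr hk
        push_cast
        field_simp
      rw [this, Complex.exp_pi_mul_I]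
    have := hF lam hlam 0
    rw [hzero lam hlam, hlamk] at this
    linear_combination this / 2
  -- a point where F is nonzero
  obtain ⟨z₀, hz₀⟩ : ∃ z₀ : Cn n, F z₀ ≠ 0 := by
    push_neg at hnc
    obtain ⟨z₀, hz₀⟩ := hnc
    exact ⟨z₀, by rwa [hF0] at hz₀⟩
  have hz₀ne : z₀ ≠ 0 := fun h => hz₀ (h ▸ hF0)
  have hz₀norm : (0 : ℝ) < ‖z₀‖ := norm_pos_iff.mpr hz₀ne
  -- the polynomial P with P.eval t = F (t • z₀)
  obtain ⟨S, c, hFc⟩ := hmixed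
  set P : Polynomial ℂ := ∑ q ∈ S,
      Polynomial.C (c q * (∏ j, (z₀ j) ^ (q.1 j)) * (∏ j, (starRingEnd ℂ (z₀ j)) ^ (q.2 j)))
        * Polynomial.X ^ (∑ j, q.1 j + ∑ j, q.2 j) with hP
  have hPeval : ∀ t : ℝ, F ((t : ℂ) • z₀) = P.eval (t : ℂ) := by
    intro t
    rw [hFc, hP]
    simp only [Polynomial.eval_finset_sum, Polynomial.eval_mul, Polynomial.eval_C,
      Polynomial.eval_pow, Polynomial.eval_X]
    refine Finset.sum_congr rfl fun q _ => ?_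
    have h1 : ∀ j, ((t : ℂ) • z₀) j = (t : ℂ) * z₀ j := fun j => rfl
    simp only [h1, map_mul, Complex.conj_ofReal, mul_pow, Finset.prod_mul_distrib,
      Finset.prod_pow_eq_pow_sum]
    ring
  have hPne : P ≠ 0 := by
    intro h
    apply hz₀
    have := hPeval 1
    rw [h] at this
    simpa using this
  intro ε hε
  -- find a small t₁ with P.eval t₁ ≠ 0
  obtain ⟨t₁, ht₁mem, ht₁ne⟩ :
      ∃ t₁ : ℝ, t₁ ∈ Set.Ioo (0 : ℝ) (ε / ‖z₀‖) ∧ P.eval (t₁ : ℂ) ≠ 0 := by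
    by_contra h
    push_neg at h
    have hroots : Set.Finite {x : ℂ | P.IsRoot x} := Polynomial.finite_setOf_isRoot hPne
    have himg : ((↑) : ℝ → ℂ) '' Set.Ioo 0 (ε / ‖z₀‖) ⊆ {x : ℂ | P.IsRoot x} := by
      rintro x ⟨t, ht, rfl⟩
      exact h t ht
    have hinf : (((↑) : ℝ → ℂ) '' Set.Ioo 0 (ε / ‖z₀‖)).Infinite :=
      (Set.Ioo_infinite (div_pos hε hz₀norm)).image
        Complex.ofReal_injective.injOn
    exact hinf (hroots.subset himg)
  obtain ⟨ht₁pos, ht₁lt⟩ := ht₁mem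
  refine ⟨‖P.eval (t₁ : ℂ)‖, norm_pos_iff.mpr ht₁ne, fun w hw => ?_⟩
  rcases eq_or_ne w 0 with rfl | hwne
  · exact ⟨0, by simpa using hε, hF0⟩
  -- IVT: find t with ‖P.eval t‖ = ‖w‖
  have hcont : ContinuousOn (fun t : ℝ => ‖P.eval (t : ℂ)‖) (Set.Icc 0 t₁) :=
    (continuous_norm.comp (P.continuous.comp Complex.continuous_ofReal)).continuousOn
  have hmem : ‖w‖ ∈ Set.Icc ‖P.eval ((0 : ℝ) : ℂ)‖
      ‖P.eval ((t₁ : ℝ) : ℂ)‖ := by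
    constructor
    · have h0 : P.eval ((0 : ℝ) : ℂ) = 0 := by
        rw [← hPeval 0]; simpa using hF0
      rw [h0]
      simpa using norm_nonneg w
    · exact le_of_lt hw
  obtain ⟨t, htmem, ht⟩ := intermediate_value_Icc ht₁pos.le hcont hmem
  have ht' : ‖P.eval (t : ℂ)‖ = ‖w‖ := ht
  have hgt : F ((t : ℂ) • z₀) ≠ 0 := by
    rw [hPeval t]
    intro h
    rw [h, norm_zero] at ht'
    exact hwne (norm_eq_zero.mp ht'.symm)
  set g : ℂ := F ((t : ℂ) • z₀) with hg
  set u : ℂ := w / g with hu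
  have habsu : ‖u‖ = 1 := by
    rw [hu, norm_div]
    have : ‖g‖ = ‖w‖ := by rw [hg, hPeval]; exact ht'
    rw [this]
    exact div_self (norm_ne_zero_iff.mpr hwne)
  set lam : ℂ := Complex.exp ((u.arg / (k : ℝ) : ℝ) * I) with hlamdef
  have hlam : ‖lam‖ = 1 := Complex.norm_exp_ofReal_mul_I _
  have hlamk : lam ^ k = u := by
    rw [hlamdef, ← Complex.exp_int_mul]
    have : (k : ℂ) * ((u.arg / (k : ℝ) : ℝ) * I) = (u.arg : ℂ) * I := by
      have hk' : (k : ℂ) ≠ 0 := Int.cast_ne_zero.mpr hk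
      push_cast
      field_simp
    rw [this]
    have := Complex.norm_mul_exp_arg_mul_I u
    rwa [habsu, Complex.ofReal_one, one_mul] at this
  set z : Cn n := WithLp.toLp 2 (fun j => lam ^ (p j) * ((t : ℂ) • z₀) j) with hzdef
  refine ⟨z, ?_, ?_⟩
  · have hnormz : ‖z‖ = ‖(t : ℂ) • z₀‖ := by
      rw [EuclideanSpace.norm_eq z, EuclideanSpace.norm_eq ((t : ℂ) • z₀)]
      congr 1
      refine Finset.sum_congr rfl fun j _ => ?_
      have : z j = lam ^ (p j) * ((t : ℂ) • z₀) j := rfl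
      rw [this, norm_mul, norm_zpow, hlam, one_zpow, one_mul]
    rw [hnormz, norm_smul]
    have : ‖(t : ℂ)‖ = t := by
      rw [Complex.norm_real, Real.norm_eq_abs, _root_.abs_of_nonneg htmem.1]
    rw [this]
    calc t * ‖z₀‖ ≤ t₁ * ‖z₀‖ := mul_le_mul_of_nonneg_right htmem.2 hz₀norm.le
      _ < ε := (lt_div_iff₀ hz₀norm).mp ht₁lt
  · rw [hzdef, hF lam hlam, hlamk, ← hg, hu]
    exact div_mul_cancel₀ w hgt
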